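/- If (x_n, y_n) ∈ 𝒟(𝒜) with ‖(x_n,y_n)‖² = 1 and (𝒜 − λ)(x_n, y_n) → 0 for a real λ, then ‖y_n − λx_n‖_{H_{1/2}} → 0 and the indefinite inner products satisfy [(x_n,y_n),(x_n,y_n)] = ⟨x_n,x_n⟩_{H_{1/2}} − λ²⟨x_n,x_n⟩_H + o(1) as n → ∞. -/

import Mathlib

open scoped InnerProductSpace ComplexConjugate
open Filter

/-- Abstract setup for the second order equation `z̈ + A₀ z + D ż = 0`:
`Hhalf` plays the role of `H_{1/2} = 𝒟(A₀^{1/2})` with the norm `‖A₀^{1/2}·‖`, `H` is the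
pivot Hilbert space and `Hm` is the dual `H_{-1/2}`; `ι : H_{1/2} → H` and `j : H → H_{-1/2}`
are the (dense, injective, continuous) inclusions; the uniformly positive self-adjoint
operator `A₀` induces an isometric isomorphism `A₀ : H_{1/2} → H_{-1/2}`; the damping
operator `D : H_{1/2} → H_{-1/2}` is bounded, and `A₀^{-1/2} D A₀^{-1/2}` is self-adjoint
nonnegative, expressed via the duality pairing
`⟨u, z⟩_{H_{-1/2}×H_{1/2}} = ⟪A₀⁻¹ u, z⟫_{H_{1/2}}`. -/
structure BeamSetup (Hhalf H Hm : Type*)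
    [NormedAddCommGroup Hhalf] [InnerProductSpace ℂ Hhalf] [CompleteSpace Hhalf]
    [NormedAddCommGroup H] [InnerProductSpace ℂ H] [CompleteSpace H]
    [NormedAddCommGroup Hm] [InnerProductSpace ℂ Hm] [CompleteSpace Hm] : Type _ where
  ι : Hhalf →L[ℂ] H
  ι_inj : Function.Injective ι
  ι_dense : DenseRange ι
  j : H →L[ℂ] Hm
  j_inj : Function.Injective j
  A₀ : Hhalf ≃ₗᵢ[ℂ] Hm
  compat : ∀ (y : H) (z : Hhalf), ⟪A₀.symm (j y), z⟫_ℂ = ⟪y, ι z⟫_ℂ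
  D : Hhalf →L[ℂ] Hm
  D_symm : ∀ z w : Hhalf, ⟪A₀.symm (D z), w⟫_ℂ = ⟪z, A₀.symm (D w)⟫_ℂ
  D_nonneg : ∀ z : Hhalf, 0 ≤ (⟪A₀.symm (D z), z⟫_ℂ).re

namespace BeamSetup

variable {Hhalf H Hm : Type*}
    [NormedAddCommGroup Hhalf] [InnerProductSpace ℂ Hhalf] [CompleteSpace Hhalf]
    [NormedAddCommGroup H] [InnerProductSpace ℂ H] [CompleteSpace H]
    [NormedAddCommGroup Hm] [InnerProductSpace ℂ Hm] [CompleteSpace Hm]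
    (S : BeamSetup Hhalf H Hm)

/-- `A₀⁻¹ : H_{-1/2} → H_{1/2}` as a continuous linear map. -/
noncomputable def Ai : Hm →L[ℂ] Hhalf :=
  (S.A₀.symm.toContinuousLinearEquiv : Hm ≃L[ℂ] Hhalf)

/-- `A₀⁻¹ D` as a bounded operator on `H_{1/2}`. -/
noncomputable def T : Hhalf →L[ℂ] Hhalf := S.Ai.comp S.D

/-- `A₀⁻¹ : H → H_{1/2}`. -/
noncomputable def Ainv : H →L[ℂ] Hhalf := S.Ai.comp S.j

/-- `A₀⁻¹` considered as a bounded operator on `H_{1/2}`. -/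
noncomputable def AinvR : Hhalf →L[ℂ] Hhalf := S.Ainv.comp S.ι

/-- `A₀⁻¹` considered as a bounded operator on `H`. -/
noncomputable def AinvH : H →L[ℂ] H := S.ι.comp S.Ainv

/-- `λ` is an eigenvalue of the operator matrix `𝒜 = [[0, I], [-A₀, -D]]` with domain
`𝒟(𝒜) = {(z,w) ∈ H_{1/2} × H_{1/2} : A₀ z + D w ∈ H}`: there is a nonzero
`(z, ι w) ∈ 𝒟(𝒜)` (the domain condition being `j y = A₀ z + D w`, so that
`𝒜 (z, ι w) = (w, -y)`) with `𝒜 (z, ι w) = λ • (z, ι w)`. -/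
def IsEigenvalue (lam : ℂ) : Prop :=
  ∃ (z w : Hhalf) (y : H), S.j y = S.A₀ z + S.D w ∧
    ((z, S.ι w) : Hhalf × H) ≠ 0 ∧ w = lam • z ∧ -y = lam • S.ι w

/-- `λ` belongs to the resolvent set of `𝒜`: there is a bounded operator `R` on
`H_{1/2} × H` mapping onto `𝒟(𝒜)` which inverts `𝒜 - λ` from both sides. -/
def InResolvent (lam : ℂ) : Prop :=
  ∃ R : (Hhalf × H) →L[ℂ] (Hhalf × H),
    (∀ q : Hhalf × H, ∃ (z w : Hhalf) (y : H),
        R q = (z, S.ι w) ∧ S.j y = S.A₀ z + S.D w ∧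
        ((w, -y) : Hhalf × H) - lam • ((z, S.ι w) : Hhalf × H) = q) ∧
    (∀ (z w : Hhalf) (y : H), S.j y = S.A₀ z + S.D w →
        R (((w, -y) : Hhalf × H) - lam • ((z, S.ι w) : Hhalf × H)) = (z, S.ι w))


end BeamSetup

open BeamSetup

open Filter in
/-- If `(xₙ, ι wₙ) ∈ 𝒟(𝒜)` with `‖(xₙ, ι wₙ)‖² = 1` and
`(𝒜 − λ)(xₙ, ι wₙ) → 0` for a real `λ` (here `𝒜 (xₙ, ι wₙ) = (wₙ, -uₙ)` with
`j uₙ = A₀ xₙ + D wₙ`), then `‖wₙ − λ xₙ‖_{H_{1/2}} → 0` and the indefinite inner products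
satisfy `[(xₙ,yₙ),(xₙ,yₙ)] = ⟨xₙ,xₙ⟩_{H_{1/2}} − λ² ⟨xₙ,xₙ⟩_H + o(1)` as `n → ∞`, where
`[(x,y),(x,y)] = ‖x‖²_{H_{1/2}} − ‖y‖²_H`. -/
theorem statement18 {Hhalf H Hm : Type*}
    [NormedAddCommGroup Hhalf] [InnerProductSpace ℂ Hhalf] [CompleteSpace Hhalf]
    [NormedAddCommGroup H] [InnerProductSpace ℂ H] [CompleteSpace H]
    [NormedAddCommGroup Hm] [InnerProductSpace ℂ Hm] [CompleteSpace Hm]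
    (S : BeamSetup Hhalf H Hm) (lam : ℝ) (x w : ℕ → Hhalf) (u : ℕ → H)
    (hdom : ∀ n, S.j (u n) = S.A₀ (x n) + S.D (w n))
    (hnorm : ∀ n, ‖x n‖ ^ 2 + ‖S.ι (w n)‖ ^ 2 = 1)
    (hconv : Tendsto
      (fun n => ((w n - (lam : ℂ) • x n, -(u n) - (lam : ℂ) • S.ι (w n)) : Hhalf × H))
      atTop (nhds 0)) :
    Tendsto (fun n => ‖w n - (lam : ℂ) • x n‖) atTop (nhds 0) ∧
    Tendsto (fun n => (‖x n‖ ^ 2 - ‖S.ι (w n)‖ ^ 2)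
        - (‖x n‖ ^ 2 - lam ^ 2 * ‖S.ι (x n)‖ ^ 2)) atTop (nhds (0 : ℝ)) := by
  have h1 : Tendsto (fun n => w n - (lam : ℂ) • x n) atTop (nhds 0) := by
    have := (continuous_fst.tendsto (0 : Hhalf × H)).comp hconv
    simpa [Function.comp_def] using this
  have hpart1 : Tendsto (fun n => ‖w n - (lam : ℂ) • x n‖) atTop (nhds 0) :=
    (tendsto_zero_iff_norm_tendsto_zero.mp h1)
  refine ⟨hpart1, ?_⟩
  -- ι applied to h1
  have h2 : Tendsto (fun n => S.ι (w n) - (lam : ℂ) • S.ι (x n)) atTop (nhds 0) := by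
    have := (S.ι.continuous.tendsto 0).comp h1
    have heq : (⇑S.ι ∘ fun n => w n - (lam : ℂ) • x n)
        = fun n => S.ι (w n) - (lam : ℂ) • S.ι (x n) := by
      funext n; simp [map_sub, map_smul]
    rw [heq] at this; simpa using this
  have h2n : Tendsto (fun n => ‖S.ι (w n) - (lam : ℂ) • S.ι (x n)‖) atTop (nhds 0) :=
    tendsto_zero_iff_norm_tendsto_zero.mp h2
  -- bounds
  have hwle : ∀ n, ‖S.ι (w n)‖ ≤ 1 := by
    intro n
    nlinarith [sq_nonneg (‖x n‖), norm_nonneg (S.ι (w n)), hnorm n,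
      sq_nonneg (‖S.ι (w n)‖ - 1)]
  have hxle : ∀ n, ‖x n‖ ≤ 1 := by
    intro n
    nlinarith [sq_nonneg (‖S.ι (w n)‖), norm_nonneg (x n), hnorm n,
      sq_nonneg (‖x n‖ - 1)]
  set C : ℝ := |lam| * ‖S.ι‖ + 1 with hC
  have hbound : ∀ n, |(‖x n‖ ^ 2 - ‖S.ι (w n)‖ ^ 2)
      - (‖x n‖ ^ 2 - lam ^ 2 * ‖S.ι (x n)‖ ^ 2)|
      ≤ C * ‖S.ι (w n) - (lam : ℂ) • S.ι (x n)‖ := by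
    intro n
    set a : ℝ := |lam| * ‖S.ι (x n)‖ with ha
    set b : ℝ := ‖S.ι (w n)‖ with hb
    have hkey : (‖x n‖ ^ 2 - ‖S.ι (w n)‖ ^ 2)
        - (‖x n‖ ^ 2 - lam ^ 2 * ‖S.ι (x n)‖ ^ 2) = (a - b) * (a + b) := by
      rw [ha, hb]; ring_nf
      rw [sq_abs]; ring
    have hdiff : |a - b| ≤ ‖S.ι (w n) - (lam : ℂ) • S.ι (x n)‖ := by
      have : a = ‖(lam : ℂ) • S.ι (x n)‖ := by
        simp [ha, norm_smul, Complex.norm_real]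
      rw [this, hb]
      have := abs_norm_sub_norm_le ((lam : ℂ) • S.ι (x n)) (S.ι (w n))
      rw [abs_sub_comm] at this
      calc |‖(lam : ℂ) • S.ι (x n)‖ - ‖S.ι (w n)‖|
          ≤ ‖(lam : ℂ) • S.ι (x n) - S.ι (w n)‖ := by
            rw [abs_sub_comm]; exact this
        _ = ‖S.ι (w n) - (lam : ℂ) • S.ι (x n)‖ := by rw [norm_sub_rev]
    have hsum : a + b ≤ C := by
      have h1 : ‖S.ι (x n)‖ ≤ ‖S.ι‖ := by
        calc ‖S.ι (x n)‖ ≤ ‖S.ι‖ * ‖x n‖ := S.ι.le_opNorm _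
          _ ≤ ‖S.ι‖ * 1 := by
              exact mul_le_mul_of_nonneg_left (hxle n) (norm_nonneg _)
          _ = ‖S.ι‖ := mul_one _
      have h2 : a ≤ |lam| * ‖S.ι‖ :=
        mul_le_mul_of_nonneg_left h1 (abs_nonneg _)
      have h3 : b ≤ 1 := hwle n
      linarith
    have hs_nonneg : 0 ≤ a + b := by positivity
    calc |(‖x n‖ ^ 2 - ‖S.ι (w n)‖ ^ 2)
        - (‖x n‖ ^ 2 - lam ^ 2 * ‖S.ι (x n)‖ ^ 2)|
        = |a - b| * (a + b) := by rw [hkey, abs_mul, abs_of_nonneg hs_nonneg]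
      _ ≤ ‖S.ι (w n) - (lam : ℂ) • S.ι (x n)‖ * C :=
          mul_le_mul hdiff hsum hs_nonneg (norm_nonneg _)
      _ = C * ‖S.ι (w n) - (lam : ℂ) • S.ι (x n)‖ := mul_comm _ _
  have hCpos : Tendsto (fun n => C * ‖S.ι (w n) - (lam : ℂ) • S.ι (x n)‖)
      atTop (nhds 0) := by
    simpa using h2n.const_mul C
  refine squeeze_zero_norm (fun n => ?_) hCpos
  simpa [Real.norm_eq_abs] using hbound n
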